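/- arXiv:1207.2902 — 7 statements merged into one kernel-verified Lean document; each statement's English description precedes it below -/
import Mathlib

section
/- There is no explicit Runge–Kutta method with strictly positive weights satisfying the effective order five (classical order two) conditions. Precisely: for every integer s ≥ 1 there do not exist a strictly lower triangular matrix A ∈ ℝ^{s×s}, a vector b ∈ ℝ^s with bᵢ > 0 for all i, and a real number β₂ such that, with c = A·e (e the all-ones vector) and all vector powers and products taken componentwise, the following four equations hold simultaneously: bᵀe = 1, bᵀ(Ac) = 1/6, (1/2)·bᵀc² − 1/6 = β₂, and (1/4)·bᵀc⁴ − bᵀ(c²·(Ac)) + bᵀ(Ac)² = β₂². Consequently, any explicit Runge–Kutta method with positive weights has effective order at most four. -/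
open Finset in
/-- There is no explicit Runge–Kutta method with strictly positive weights
satisfying the effective order five (classical order two) conditions. -/
theorem no_explicit_RK_positive_weights_effective_order_five (s : ℕ) (hs : 1 ≤ s) :
    ¬ ∃ (A : Matrix (Fin s) (Fin s) ℝ) (b : Fin s → ℝ) (β₂ : ℝ),
      (∀ i j : Fin s, i ≤ j → A i j = 0) ∧
      (∀ i, 0 < b i) ∧
      (let c : Fin s → ℝ := A.mulVec (fun _ => 1);
       let Ac : Fin s → ℝ := A.mulVec c;
       (∑ i, b i) = 1 ∧
       (∑ i, b i * Ac i) = 1 / 6 ∧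
       (1 / 2) * (∑ i, b i * (c i) ^ 2) - 1 / 6 = β₂ ∧
       (1 / 4) * (∑ i, b i * (c i) ^ 4)
         - (∑ i, b i * ((c i) ^ 2 * Ac i))
         + (∑ i, b i * (Ac i) ^ 2) = β₂ ^ 2) := by
  rintro ⟨A, b, β₂, hA, hb, h⟩
  dsimp only at h
  obtain ⟨h1, h2, h3, h4⟩ := h
  set c : Fin s → ℝ := A.mulVec (fun _ => 1) with hcdef
  set Ac : Fin s → ℝ := A.mulVec c with hAcdef
  have hAc_eq : ∀ i, Ac i = ∑ j, A i j * c j := by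
    intro i; simp [hAcdef, Matrix.mulVec, dotProduct]
  have hc_eq : ∀ i, c i = ∑ j, A i j := by
    intro i; simp [hcdef, Matrix.mulVec, dotProduct]
  set x : Fin s → ℝ := fun i => (c i) ^ 2 / 2 - Ac i with hxdef
  have hx_sum : (∑ i, b i * x i) = β₂ := by
    have e : (∑ i, b i * x i)
        = (1 / 2) * (∑ i, b i * (c i) ^ 2) - (∑ i, b i * Ac i) := by
      rw [Finset.mul_sum, ← Finset.sum_sub_distrib]
      exact Finset.sum_congr rfl fun i _ => by simp only [hxdef]; ring
    rw [e, h2]; linarith [h3]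
  have hx_sq : (∑ i, b i * (x i) ^ 2) = β₂ ^ 2 := by
    have e : (∑ i, b i * (x i) ^ 2)
        = (1 / 4) * (∑ i, b i * (c i) ^ 4)
          - (∑ i, b i * ((c i) ^ 2 * Ac i)) + (∑ i, b i * (Ac i) ^ 2) := by
      rw [Finset.mul_sum, ← Finset.sum_sub_distrib, ← Finset.sum_add_distrib]
      exact Finset.sum_congr rfl fun i _ => by simp only [hxdef]; ring
    rw [e, h4]
  have hvar : (∑ i, b i * (x i - β₂) ^ 2) = 0 := by
    have e : (∑ i, b i * (x i - β₂) ^ 2)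
        = (∑ i, b i * (x i) ^ 2) - 2 * β₂ * (∑ i, b i * x i)
          + β₂ ^ 2 * (∑ i, b i) := by
      rw [Finset.mul_sum, Finset.mul_sum, ← Finset.sum_sub_distrib,
        ← Finset.sum_add_distrib]
      exact Finset.sum_congr rfl fun i _ => by ring
    rw [e, hx_sq, hx_sum, h1]; ring
  have hxconst : ∀ i, x i = β₂ := by
    intro i
    have h0 : ∀ j ∈ Finset.univ, 0 ≤ b j * (x j - β₂) ^ 2 := fun j _ =>
      mul_nonneg (hb j).le (sq_nonneg _)
    have hz := (Finset.sum_eq_zero_iff_of_nonneg h0).mp hvar i (Finset.mem_univ i)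
    have hsq : (x i - β₂) ^ 2 = 0 := by
      rcases mul_eq_zero.mp hz with h | h
      · exact absurd h (ne_of_gt (hb i))
      · exact h
    have := sq_eq_zero_iff.mp hsq
    linarith
  -- β₂ = 0 using the first row
  set i0 : Fin s := ⟨0, hs⟩ with hi0def
  have hi0le : ∀ j : Fin s, i0 ≤ j := fun j => by
    simp only [hi0def, Fin.le_def]; exact Nat.zero_le _
  have hc0 : c i0 = 0 := by
    rw [hc_eq]; exact Finset.sum_eq_zero fun j _ => hA i0 j (hi0le j)
  have hAc0 : Ac i0 = 0 := by
    rw [hAc_eq]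
    exact Finset.sum_eq_zero fun j _ => by rw [hA i0 j (hi0le j), zero_mul]
  have hβ0 : β₂ = 0 := by
    have := hxconst i0
    simp only [hxdef, hc0, hAc0] at this
    linarith
  -- all c vanish by strong induction
  have hcz : ∀ n : ℕ, ∀ i : Fin s, i.val = n → c i = 0 := by
    intro n
    induction n using Nat.strong_induction_on with
    | _ n ih =>
      intro i hi
      have hAci : Ac i = 0 := by
        rw [hAc_eq]
        apply Finset.sum_eq_zero
        intro j _
        rcases le_or_gt i j with h | h
        · rw [hA i j h, zero_mul]
        · rw [ih j.val (by omega) j rfl, mul_zero]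
      have hx0 := hxconst i
      rw [hβ0] at hx0
      have hcsq : (c i) ^ 2 = 0 := by
        simp only [hxdef, hAci] at hx0; linarith
      exact sq_eq_zero_iff.mp hcsq
  have hAcz : ∀ i, Ac i = 0 := by
    intro i
    rw [hAc_eq]
    apply Finset.sum_eq_zero
    intro j _
    rw [hcz j.val j rfl, mul_zero]
  rw [Finset.sum_congr rfl fun i _ => by rw [hAcz i, mul_zero]] at h2
  simp at h2
end

section
/- Let A ∈ ℝ^{s×s} be strictly lower triangular, b ∈ ℝ^s with bᵢ > 0 for all i, c = A·e, and β₂ ∈ ℝ, and suppose bᵀe = 1, bᵀ(Ac) = 1/6, (1/2)·bᵀc² − 1/6 = β₂, and (1/4)·bᵀc⁴ − bᵀ(c²·(Ac)) + bᵀ(Ac)² = β₂². Then β₂ = 0 and (1/2)cᵢ² = (Ac)ᵢ for every i, i.e., the method has stage order two. -/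
open Finset in
/-- The effective order five, classical order two conditions with positive
weights force stage order two. -/
theorem effective_order_five_forces_stage_order_two (s : ℕ)
    (A : Matrix (Fin s) (Fin s) ℝ) (b : Fin s → ℝ) (c : Fin s → ℝ) (β₂ : ℝ)
    (hA : ∀ i j : Fin s, i ≤ j → A i j = 0)
    (hb : ∀ i, 0 < b i)
    (hc : c = A.mulVec (fun _ => 1))
    (h1 : ∑ i, b i = 1)
    (h4 : ∑ i, b i * A.mulVec c i = 1 / 6)
    (h3 : (1 / 2) * (∑ i, b i * (c i) ^ 2) - 1 / 6 = β₂)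
    (h5 : (1 / 4) * (∑ i, b i * (c i) ^ 4)
      - (∑ i, b i * ((c i) ^ 2 * A.mulVec c i))
      + (∑ i, b i * (A.mulVec c i) ^ 2) = β₂ ^ 2) :
    β₂ = 0 ∧ ∀ i, (1 / 2) * (c i) ^ 2 = A.mulVec c i := by
  have hs : 0 < s := by
    rcases Nat.eq_zero_or_pos s with h | h
    · subst h; simp at h1
    · exact h
  set d : Fin s → ℝ := fun i => (1 / 2) * (c i) ^ 2 - A.mulVec c i with hd
  have e2 : ∑ i, b i * d i = β₂ := by
    have : ∑ i, b i * d i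
        = (1 / 2) * (∑ i, b i * (c i) ^ 2) - ∑ i, b i * A.mulVec c i := by
      rw [Finset.mul_sum, ← Finset.sum_sub_distrib]
      exact Finset.sum_congr rfl fun i _ => by simp only [hd]; ring
    rw [this, h4]; linarith
  have e3 : ∑ i, b i * (d i) ^ 2 = β₂ ^ 2 := by
    have : ∑ i, b i * (d i) ^ 2
        = (1 / 4) * (∑ i, b i * (c i) ^ 4)
          - (∑ i, b i * ((c i) ^ 2 * A.mulVec c i))
          + (∑ i, b i * (A.mulVec c i) ^ 2) := by
      rw [Finset.mul_sum, ← Finset.sum_sub_distrib, ← Finset.sum_add_distrib]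
      exact Finset.sum_congr rfl fun i _ => by simp only [hd]; ring
    rw [this, h5]
  have key : ∑ i, b i * (d i - β₂) ^ 2 = 0 := by
    have : ∑ i, b i * (d i - β₂) ^ 2
        = (∑ i, b i * (d i) ^ 2) - 2 * β₂ * (∑ i, b i * d i)
          + β₂ ^ 2 * (∑ i, b i) := by
      rw [Finset.mul_sum, Finset.mul_sum, ← Finset.sum_sub_distrib,
        ← Finset.sum_add_distrib]
      exact Finset.sum_congr rfl fun i _ => by ring
    rw [this, e2, e3, h1]; ring
  have hall : ∀ i, d i = β₂ := by
    intro i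
    have h0 := (Finset.sum_eq_zero_iff_of_nonneg
      (fun i _ => mul_nonneg (hb i).le (sq_nonneg _))).mp key i (Finset.mem_univ i)
    have := mul_eq_zero.mp h0
    rcases this with h | h
    · exact absurd h (hb i).ne'
    · have := pow_eq_zero_iff (n := 2) (by norm_num) |>.mp h
      linarith [this]
  have hβ : β₂ = 0 := by
    set i0 : Fin s := ⟨0, hs⟩
    have hle : ∀ j : Fin s, i0 ≤ j := fun j => by
      simp [i0, Fin.le_def]
    have hc0 : c i0 = 0 := by
      rw [hc]; unfold Matrix.mulVec dotProduct
      exact Finset.sum_eq_zero fun j _ => by simp [hA i0 j (hle j)]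
    have hAc0 : A.mulVec c i0 = 0 := by
      unfold Matrix.mulVec dotProduct
      exact Finset.sum_eq_zero fun j _ => by simp [hA i0 j (hle j)]
    have := hall i0
    simp only [hd, hc0, hAc0] at this
    linarith [this]
  refine ⟨hβ, fun i => ?_⟩
  have := hall i
  simp only [hd, hβ] at this
  linarith [this]
end

section
/- SSP property of the three-stage family of Theorem 5.1: for every γ with 1/4 ≤ γ ≤ 1, the explicit three-stage Runge–Kutta method with coefficient matrix A ∈ ℝ^{3×3} given by a₂₁ = 1, a₃₁ = a₃₂ = γ (all other entries zero) and weights b = ((5γ−1)/(6γ), 1/6, 1/(6γ)) satisfies the absolute monotonicity conditions with r = 1: the matrix I + rA is invertible, K(I + rA)^{-1} ≥ 0 componentwise, and e₄ − r·K(I + rA)^{-1}e₃ ≥ 0 componentwise, where K ∈ ℝ^{4×3} is the matrix whose first three rows are A and whose last row is bᵀ, and e₃ ∈ ℝ³, e₄ ∈ ℝ⁴ are all-ones vectors. Hence the method has SSP coefficient at least 1. -/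
open Finset in
/-- The matrix stacking `A` on top of `bᵀ`. -/
def rkStack {s : ℕ} (A : Matrix (Fin s) (Fin s) ℝ) (b : Fin s → ℝ) :
    Matrix (Fin (s + 1)) (Fin s) ℝ :=
  Matrix.of fun i j => if h : (i : ℕ) < s then A ⟨i, h⟩ j else b j

open Finset in
/-- SSP property of the three-stage family of Theorem 5.1: the absolute
monotonicity conditions hold with r = 1. -/
theorem essprk332_family_absolutely_monotonic (γ : ℝ) (h₁ : 1 / 4 ≤ γ) (h₂ : γ ≤ 1) :
    let A : Matrix (Fin 3) (Fin 3) ℝ := !![0, 0, 0; 1, 0, 0; γ, γ, 0]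
    let b : Fin 3 → ℝ := ![(5 * γ - 1) / (6 * γ), 1 / 6, 1 / (6 * γ)]
    let r : ℝ := 1
    let K := rkStack A b
    IsUnit (1 + r • A).det ∧
    (∀ i j, 0 ≤ (K * (1 + r • A)⁻¹) i j) ∧
    (∀ i : Fin 4, 0 ≤ 1 - r * ((K * (1 + r • A)⁻¹).mulVec (fun _ => 1)) i) := by
  intro A b r K
  have hγ : (0:ℝ) < γ := by linarith
  have hK : K = !![0,0,0; 1,0,0; γ,γ,0; (5*γ-1)/(6*γ), 1/6, 1/(6*γ)] := by
    ext i j; fin_cases i <;> fin_cases j <;> rfl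
  have hM : (1 : Matrix (Fin 3) (Fin 3) ℝ) + r • A = !![1,0,0;1,1,0;γ,γ,1] := by
    ext i j
    fin_cases i <;> fin_cases j <;>
      simp [A, r, Matrix.one_apply, Matrix.add_apply, Matrix.vecHead, Matrix.vecTail]
  have hdet : (1 + r • A).det = 1 := by
    rw [hM, Matrix.det_fin_three]; simp
  have hinv : (1 + r • A)⁻¹ = !![1,0,0;-1,1,0;0,-γ,1] := by
    apply Matrix.inv_eq_right_inv
    rw [hM]
    ext i j
    fin_cases i <;> fin_cases j <;>
      simp [Matrix.mul_apply, Fin.sum_univ_three, Matrix.one_apply,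
        Matrix.vecHead, Matrix.vecTail] <;> ring_nf
  have key : (0:ℝ) ≤ (5*γ-1)/(6*γ) - 1/6 := by
    rw [sub_nonneg, div_le_div_iff₀ (by norm_num) (by positivity)]
    nlinarith
  have hb3 : (0:ℝ) ≤ 1/(6*γ) := by positivity
  have hsum : (5*γ-1)/(6*γ) + 1/(6*γ) = 5/6 := by field_simp; ring
  have hKB : K * (1 + r • A)⁻¹ =
      !![0,0,0; 1,0,0; 0,γ,0; (5*γ-1)/(6*γ) - 1/6, 0, 1/(6*γ)] := by
    rw [hinv, hK]
    ext i j
    fin_cases i <;> fin_cases j <;>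
      simp [Matrix.mul_apply, Fin.sum_univ_three, Matrix.vecHead, Matrix.vecTail] <;>
      field_simp <;> ring
  refine ⟨by rw [hdet]; exact isUnit_one, ?_, ?_⟩
  · intro i j
    fin_cases i <;> fin_cases j <;>
      simp [hKB, Matrix.vecHead, Matrix.vecTail] <;> first | positivity | linarith
  · intro i
    have : ∀ i, ((K * (1 + r • A)⁻¹).mulVec (fun _ => 1)) i =
        (K * (1 + r • A)⁻¹) i 0 + (K * (1 + r • A)⁻¹) i 1 + (K * (1 + r • A)⁻¹) i 2 := by
      intro i
      simp [Matrix.mulVec, dotProduct, Fin.sum_univ_three]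
    rw [this, hKB]
    fin_cases i <;>
      simp [show r = (1:ℝ) from rfl, Matrix.vecHead, Matrix.vecTail] <;>
      linarith [hsum, show γ⁻¹ * 6⁻¹ = 1/(6*γ) from by ring]
end

section
/- Optimality bound for three-stage effective order three methods: there is no strictly lower triangular matrix A ∈ ℝ^{3×3} and vector b ∈ ℝ³ such that, with c = A·e, the order conditions bᵀe = 1, bᵀc = 1/2, bᵀ(Ac) = 1/6 hold and the absolute monotonicity conditions hold at some r > 1 (I + rA invertible, K(I + rA)^{-1} ≥ 0 componentwise, and e₄ − r·K(I + rA)^{-1}e₃ ≥ 0 componentwise, where K stacks A on top of bᵀ). Hence the SSP coefficient of any three-stage method of effective order three is at most 1, and the family of Theorem 5.1 is optimal. -/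
set_option linter.unnecessarySeqFocus false

open Finset in
/-- Optimality bound: no three-stage explicit method satisfying the effective
order three conditions is absolutely monotonic at any r > 1. -/
theorem essprk332_optimality :
    ¬ ∃ (A : Matrix (Fin 3) (Fin 3) ℝ) (b : Fin 3 → ℝ) (r : ℝ),
      (∀ i j : Fin 3, i ≤ j → A i j = 0) ∧
      (let c : Fin 3 → ℝ := A.mulVec (fun _ => 1);
       (∑ i, b i) = 1 ∧
       (∑ i, b i * c i) = 1 / 2 ∧
       (∑ i, b i * A.mulVec c i) = 1 / 6) ∧
      1 < r ∧
      IsUnit (1 + r • A).det ∧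
      (∀ i j, 0 ≤ (rkStack A b * (1 + r • A)⁻¹) i j) ∧
      (∀ i : Fin 4,
        0 ≤ 1 - r * ((rkStack A b * (1 + r • A)⁻¹).mulVec (fun _ => 1)) i) := by
  rintro ⟨A, b, r, hlow, horder, hr, hunit, hP, he⟩
  set a21 := A 1 0 with ha21
  set a31 := A 2 0 with ha31
  set a32 := A 2 1 with ha32
  have hA : A = !![0, 0, 0; a21, 0, 0; a31, a32, 0] := by
    ext i j
    fin_cases i <;> fin_cases j <;>
      simp [ha21, ha31, ha32] <;>
      exact hlow _ _ (by decide)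
  -- explicit inverse of 1 + r • A
  have hBinv : (1 + r • A)⁻¹ =
      !![1, 0, 0; -(r*a21), 1, 0; r^2*a32*a21 - r*a31, -(r*a32), 1] := by
    apply Matrix.inv_eq_right_inv
    rw [hA]
    ext i j
    fin_cases i <;> fin_cases j <;>
      simp [Matrix.mul_apply, Fin.sum_univ_three, Matrix.one_apply] <;> ring
  have hK : rkStack A b = !![0, 0, 0; a21, 0, 0; a31, a32, 0; b 0, b 1, b 2] := by
    rw [hA]
    ext i j
    fin_cases i <;> fin_cases j <;> rfl
  set P := rkStack A b * (1 + r • A)⁻¹ with hPdef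
  have hPval : P = !![0, 0, 0; a21, 0, 0; a31 - r*a21*a32, a32, 0;
      b 0 + b 1 * (-(r*a21)) + b 2 * (r^2*a32*a21 - r*a31), b 1 - r * b 2 * a32, b 2] := by
    rw [hPdef, hK, hBinv]
    ext i j
    fin_cases i <;> fin_cases j <;>
      simp [Matrix.mul_apply, Fin.sum_univ_three] <;> ring
  -- extract inequalities
  have h1 : (0:ℝ) ≤ a21 := by have := hP 1 0; rw [hPval] at this; simpa using this
  have h2 : (0:ℝ) ≤ a32 := by have := hP 2 1; rw [hPval] at this; simpa using this
  have h3 : (0:ℝ) ≤ b 2 := by have := hP 3 2; rw [hPval] at this; simpa using this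
  have h4 : (0:ℝ) ≤ a31 - r*a21*a32 := by
    have := hP 2 0; rw [hPval] at this; simpa using this
  have h5 : (0:ℝ) ≤ b 1 - r * b 2 * a32 := by
    have := hP 3 1; rw [hPval] at this; simpa using this
  have h6 : (0:ℝ) ≤ 1 - r * a21 := by
    have := he 1
    rw [hPval] at this
    simpa [Matrix.mulVec, dotProduct, Fin.sum_univ_three] using this
  -- order conditions
  obtain ⟨ho1, ho2, ho3⟩ := horder
  have hc2 : b 1 * a21 + b 2 * (a31 + a32) = 1/2 := by
    rw [hA] at ho2
    simpa [Matrix.mulVec, dotProduct, Fin.sum_univ_three] using ho2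
  have hc3 : b 2 * (a32 * a21) = 1/6 := by
    rw [hA] at ho3
    simpa [Matrix.mulVec, dotProduct, Fin.sum_univ_three] using ho3
  nlinarith [mul_nonneg h3 h4, mul_nonneg h1 h5,
    mul_nonneg (mul_nonneg h3 h2) h6, hc2, hc3, hr.le]
end

section
/- Order conditions for the four-stage family of Theorem 5.2: for every real γ ≠ 0, the explicit four-stage Runge–Kutta method with coefficient matrix A ∈ ℝ^{4×4} given by a₂₁ = 1/2, a₃₁ = a₃₂ = 1/2, a₄₁ = a₄₂ = a₄₃ = γ (all other entries zero) and weights b = ((8γ−1)/(12γ), 1/6, 1/6, 1/(12γ)) satisfies, with c = A·e = (0, 1/2, 1, 3γ), the conditions bᵀe = 1, bᵀc = 1/2, and bᵀ(Ac) = 1/6 (the conditions for effective order three with classical order two). -/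
open Finset in
/-- Order conditions for the four-stage family of Theorem 5.2. -/
theorem essprk432_family_order_conditions (γ : ℝ) (hγ : γ ≠ 0) :
    let A : Matrix (Fin 4) (Fin 4) ℝ :=
      !![0, 0, 0, 0; 1/2, 0, 0, 0; 1/2, 1/2, 0, 0; γ, γ, γ, 0]
    let b : Fin 4 → ℝ := ![(8 * γ - 1) / (12 * γ), 1 / 6, 1 / 6, 1 / (12 * γ)]
    let c : Fin 4 → ℝ := A.mulVec (fun _ => 1)
    c = ![0, 1 / 2, 1, 3 * γ] ∧
    (∑ i, b i) = 1 ∧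
    (∑ i, b i * c i) = 1 / 2 ∧
    (∑ i, b i * A.mulVec c i) = 1 / 6 := by
  intro A b c
  have hc : c = ![0, 1 / 2, 1, 3 * γ] := by
    funext i
    fin_cases i <;>
      simp [c, A, Matrix.mulVec, dotProduct, Fin.sum_univ_four] <;> ring
  refine ⟨hc, ?_, ?_, ?_⟩
  · simp [b, Fin.sum_univ_four]
    field_simp
    ring
  · rw [hc]
    simp [b, Fin.sum_univ_four]
    field_simp
    ring
  · rw [hc]
    simp [b, A, Matrix.mulVec, dotProduct, Fin.sum_univ_four]
    field_simp
    ring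
end

section
/- SSP property of the four-stage family of Theorem 5.2: for every γ with 1/6 ≤ γ ≤ 1/2, the explicit four-stage Runge–Kutta method with coefficient matrix A ∈ ℝ^{4×4} given by a₂₁ = 1/2, a₃₁ = a₃₂ = 1/2, a₄₁ = a₄₂ = a₄₃ = γ (all other entries zero) and weights b = ((8γ−1)/(12γ), 1/6, 1/6, 1/(12γ)) satisfies the absolute monotonicity conditions with r = 2: the matrix I + rA is invertible, K(I + rA)^{-1} ≥ 0 componentwise, and e₅ − r·K(I + rA)^{-1}e₄ ≥ 0 componentwise, where K ∈ ℝ^{5×4} is the matrix whose first four rows are A and whose last row is bᵀ, and e₄ ∈ ℝ⁴, e₅ ∈ ℝ⁵ are all-ones vectors. Hence the method has SSP coefficient at least 2. -/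
open Finset in
/-- SSP property of the four-stage family of Theorem 5.2: the absolute
monotonicity conditions hold with r = 2. -/
theorem essprk432_family_absolutely_monotonic (γ : ℝ)
    (h₁ : 1 / 6 ≤ γ) (h₂ : γ ≤ 1 / 2) :
    let A : Matrix (Fin 4) (Fin 4) ℝ :=
      !![0, 0, 0, 0; 1/2, 0, 0, 0; 1/2, 1/2, 0, 0; γ, γ, γ, 0]
    let b : Fin 4 → ℝ := ![(8 * γ - 1) / (12 * γ), 1 / 6, 1 / 6, 1 / (12 * γ)]
    let r : ℝ := 2
    let K := rkStack A b
    IsUnit (1 + r • A).det ∧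
    (∀ i j, 0 ≤ (K * (1 + r • A)⁻¹) i j) ∧
    (∀ i : Fin 5, 0 ≤ 1 - r * ((K * (1 + r • A)⁻¹).mulVec (fun _ => 1)) i) := by
  intro A b r K
  have hγ : (0:ℝ) < γ := by linarith
  have hγ' : γ ≠ 0 := ne_of_gt hγ
  have hK : K = Matrix.of ![![0,0,0,0], ![1/2,0,0,0], ![1/2,1/2,0,0], ![γ,γ,γ,0],
      ![(8 * γ - 1) / (12 * γ), 1/6, 1/6, 1/(12*γ)]] := by
    ext i j
    fin_cases i <;> fin_cases j <;> rfl
  have hRI : (1 + r • A) * !![1,0,0,0; -1,1,0,0; 0,-1,1,0; 0,0,-2*γ,1] = 1 := by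
    ext i j
    fin_cases i <;> fin_cases j <;>
      simp [A, r, Matrix.mul_apply, Fin.sum_univ_four, Matrix.one_apply,
        Matrix.vecHead, Matrix.vecTail]
  have hM : (1 + r • A)⁻¹ = !![1,0,0,0; -1,1,0,0; 0,-1,1,0; 0,0,-2*γ,1] :=
    Matrix.inv_eq_right_inv hRI
  have hKM : K * (1 + r • A)⁻¹ =
      Matrix.of ![![0,0,0,0], ![1/2,0,0,0], ![0,1/2,0,0], ![0,0,γ,0],
        ![(6*γ-1)/(12*γ),0,0,1/(12*γ)]] := by
    rw [hK, hM]
    ext i j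
    fin_cases i <;> fin_cases j <;>
      simp [Matrix.mul_apply, Fin.sum_univ_four, Matrix.vecHead, Matrix.vecTail] <;>
      field_simp <;> ring
  refine ⟨?_, ?_, ?_⟩
  · exact Matrix.isUnit_det_of_right_inverse hRI
  · intro i j
    rw [hKM]
    fin_cases i <;> fin_cases j <;>
      simp [Matrix.vecHead, Matrix.vecTail] <;>
      first
        | positivity
        | (apply div_nonneg <;> linarith)
        | linarith
  · intro i
    rw [hKM]
    have h5 : (6*γ-1)/(12*γ) + γ⁻¹ * 12⁻¹ = 1/2 := by field_simp; ring
    fin_cases i <;>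
      simp [Matrix.mulVec, dotProduct, Fin.sum_univ_four, r,
        Matrix.vecHead, Matrix.vecTail] <;>
      linarith
end

section
/- Optimality bound for four-stage effective order three methods: there is no strictly lower triangular matrix A ∈ ℝ^{4×4} and vector b ∈ ℝ⁴ such that, with c = A·e, the order conditions bᵀe = 1, bᵀc = 1/2, bᵀ(Ac) = 1/6 hold and the absolute monotonicity conditions hold at some r > 2 (I + rA invertible, K(I + rA)^{-1} ≥ 0 componentwise, and e₅ − r·K(I + rA)^{-1}e₄ ≥ 0 componentwise, where K stacks A on top of bᵀ). Hence the SSP coefficient of any four-stage method of effective order three is at most 2, and the family of Theorem 5.2 is optimal. -/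
open Finset in
/-- Optimality bound: no four-stage explicit method satisfying the effective
order three conditions is absolutely monotonic at any r > 2. -/
theorem essprk432_optimality :
    ¬ ∃ (A : Matrix (Fin 4) (Fin 4) ℝ) (b : Fin 4 → ℝ) (r : ℝ),
      (∀ i j : Fin 4, i ≤ j → A i j = 0) ∧
      (let c : Fin 4 → ℝ := A.mulVec (fun _ => 1);
       (∑ i, b i) = 1 ∧
       (∑ i, b i * c i) = 1 / 2 ∧
       (∑ i, b i * A.mulVec c i) = 1 / 6) ∧
      2 < r ∧
      IsUnit (1 + r • A).det ∧
      (∀ i j, 0 ≤ (rkStack A b * (1 + r • A)⁻¹) i j) ∧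
      (∀ i : Fin 5,
        0 ≤ 1 - r * ((rkStack A b * (1 + r • A)⁻¹).mulVec (fun _ => 1)) i) := by
  rintro ⟨A, b, r, hA, hord, hr, -, hP, hE⟩
  open Matrix in
  obtain ⟨-, h2, h3⟩ := hord
  set e4 : Fin 4 → ℝ := fun _ => 1 with he4
  -- nilpotency of the strictly lower triangular matrix
  have hA4 : A * A * (A * A) = 0 := by
    have z00 := hA 0 0 (by decide); have z01 := hA 0 1 (by decide)
    have z02 := hA 0 2 (by decide); have z03 := hA 0 3 (by decide)
    have z11 := hA 1 1 (by decide); have z12 := hA 1 2 (by decide)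
    have z13 := hA 1 3 (by decide); have z22 := hA 2 2 (by decide)
    have z23 := hA 2 3 (by decide); have z33 := hA 3 3 (by decide)
    ext i j
    fin_cases i <;> fin_cases j <;>
      simp [Matrix.mul_apply, Fin.sum_univ_four, z00, z01, z02, z03, z11, z12, z13, z22, z23, z33]
  set C : Matrix (Fin 4) (Fin 4) ℝ := r • A with hC
  have hC4 : C ^ 4 = 0 := by
    have h1 : C ^ 4 = (r ^ 4) • (A * A * (A * A)) := by
      rw [hC, smul_pow]
      congr 1
      noncomm_ring
    rw [h1, hA4, smul_zero]
  have hC5 : C ^ 5 = 0 := by rw [pow_succ, hC4, zero_mul]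
  have hC6 : C ^ 6 = 0 := by rw [pow_succ, hC5, zero_mul]
  set M : Matrix (Fin 4) (Fin 4) ℝ := 1 - C + C ^ 2 - C ^ 3 with hM
  -- M is the inverse of 1 + C
  have hinv : (1 + C) * M = 1 := by
    have h1 : (1 + C) * (1 - C + C ^ 2 - C ^ 3) = 1 - C ^ 4 := by noncomm_ring
    rw [hM, h1, hC4, sub_zero]
  have hMeq : (1 + r • A)⁻¹ = M := Matrix.inv_eq_right_inv hinv
  rw [hMeq] at hP hE
  -- M = 1 - C * M
  have hM1 : M = 1 - C * M := by
    have h1 := hinv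
    rw [add_mul, one_mul] at h1
    rw [← h1]; noncomm_ring
  -- nonnegativity facts from absolute monotonicity
  have hu : ∀ j, 0 ≤ M.vecMul b j := by
    intro j
    have h1 := hP 4 j
    have hrow : ∀ k, rkStack A b 4 k = b k := by
      intro k
      simp [rkStack, show ¬(((4 : Fin 5) : ℕ) < 4) from by decide]
    simpa [Matrix.mul_apply, Matrix.vecMul, dotProduct, hrow] using h1
  have hAM : ∀ (i j : Fin 4), 0 ≤ (A * M) i j := by
    intro i j
    have h1 := hP ⟨i.1, by omega⟩ j
    have hrow : ∀ k, rkStack A b ⟨i.1, by omega⟩ k = A i k := by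
      intro k; simp [rkStack, i.isLt]
    simpa [Matrix.mul_apply, hrow] using h1
  have hCM : ∀ (i j : Fin 4), 0 ≤ (C * M) i j := by
    intro i j
    have h1 : (C * M) i j = r * (A * M) i j := by
      rw [hC, Matrix.smul_mul]; simp
    rw [h1]
    exact mul_nonneg (by linarith) (hAM i j)
  have hv : ∀ i, 0 ≤ M.mulVec e4 i := by
    intro i
    have h5 := hE ⟨i.1, by omega⟩
    have hrow : ∀ k, rkStack A b ⟨i.1, by omega⟩ k = A i k := by
      intro k; simp [rkStack, i.isLt]
    have hERow : ((rkStack A b * M).mulVec e4) ⟨i.1, by omega⟩ = ((A * M).mulVec e4) i := by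
      simp [Matrix.mulVec, dotProduct, Matrix.mul_apply, hrow]
    rw [hERow] at h5
    have h6 : M.mulVec e4 i = 1 - r * ((A * M).mulVec e4) i := by
      nth_rewrite 1 [hM1]
      have hsm : C * M = r • (A * M) := by rw [hC, Matrix.smul_mul]
      rw [Matrix.sub_mulVec, hsm, Matrix.smul_mulVec]
      simp [Matrix.mulVec, dotProduct, he4]
    rw [h6]
    exact h5
  -- (C*M) applied to a nonnegative vector is nonnegative
  have hCMv : ∀ (w : Fin 4 → ℝ), (∀ k, 0 ≤ w k) → ∀ i, 0 ≤ (C * M).mulVec w i := by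
    intro w hw i
    simp only [Matrix.mulVec, dotProduct]
    exact Finset.sum_nonneg fun k _ => mul_nonneg (hCM i k) (hw k)
  -- the two key nonnegative scalars
  have hS2 : 0 ≤ b ⬝ᵥ ((M * ((C * M) * M)).mulVec e4) := by
    have hx : (M * ((C * M) * M)).mulVec e4 = M.mulVec ((C * M).mulVec (M.mulVec e4)) := by
      simp only [Matrix.mulVec_mulVec, Matrix.mul_assoc]
    rw [hx, Matrix.dotProduct_mulVec]
    exact Finset.sum_nonneg fun j _ => mul_nonneg (hu j) (hCMv _ hv j)
  have hS3 : 0 ≤ b ⬝ᵥ ((M * ((C * M) * ((C * M) * M))).mulVec e4) := by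
    have hx : (M * ((C * M) * ((C * M) * M))).mulVec e4
        = M.mulVec ((C * M).mulVec ((C * M).mulVec (M.mulVec e4))) := by
      simp only [Matrix.mulVec_mulVec, Matrix.mul_assoc]
    rw [hx, Matrix.dotProduct_mulVec]
    exact Finset.sum_nonneg fun j _ =>
      mul_nonneg (hu j) (hCMv _ (fun k => hCMv _ hv k) j)
  -- algebraic identities modulo C^4 = 0
  have e1 : M * C = C - C ^ 2 + C ^ 3 := by
    have h1 : (1 - C + C ^ 2 - C ^ 3) * C = C - C ^ 2 + C ^ 3 - C ^ 4 := by noncomm_ring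
    rw [hM, h1, hC4, sub_zero]
  have e2 : (C - C ^ 2 + C ^ 3) * M = C - 2 * C ^ 2 + 3 * C ^ 3 := by
    have h1 : (C - C ^ 2 + C ^ 3) * (1 - C + C ^ 2 - C ^ 3)
        = C - 2 * C ^ 2 + 3 * C ^ 3 - 3 * C ^ 4 + 2 * C ^ 5 - C ^ 6 := by noncomm_ring
    rw [hM, h1, hC4, hC5, hC6]
    noncomm_ring
  have e3 : (C - 2 * C ^ 2 + 3 * C ^ 3) * M = C - 3 * C ^ 2 + 6 * C ^ 3 := by
    have h1 : (C - 2 * C ^ 2 + 3 * C ^ 3) * (1 - C + C ^ 2 - C ^ 3)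
        = C - 3 * C ^ 2 + 6 * C ^ 3 - 6 * C ^ 4 + 5 * C ^ 5 - 3 * C ^ 6 := by noncomm_ring
    rw [hM, h1, hC4, hC5, hC6]
    noncomm_ring
  have e4' : (C - 2 * C ^ 2 + 3 * C ^ 3) * C = C ^ 2 - 2 * C ^ 3 := by
    have h1 : (C - 2 * C ^ 2 + 3 * C ^ 3) * C = C ^ 2 - 2 * C ^ 3 + 3 * C ^ 4 := by noncomm_ring
    rw [h1, hC4]
    noncomm_ring
  have e5' : (C ^ 2 - 2 * C ^ 3) * M = C ^ 2 - 3 * C ^ 3 := by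
    have h1 : (C ^ 2 - 2 * C ^ 3) * (1 - C + C ^ 2 - C ^ 3)
        = C ^ 2 - 3 * C ^ 3 + 3 * C ^ 4 - 3 * C ^ 5 + 2 * C ^ 6 := by noncomm_ring
    rw [hM, h1, hC4, hC5, hC6]
    noncomm_ring
  have e6' : (C ^ 2 - 3 * C ^ 3) * M = C ^ 2 - 4 * C ^ 3 := by
    have h1 : (C ^ 2 - 3 * C ^ 3) * (1 - C + C ^ 2 - C ^ 3)
        = C ^ 2 - 4 * C ^ 3 + 4 * C ^ 4 - 4 * C ^ 5 + 3 * C ^ 6 := by noncomm_ring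
    rw [hM, h1, hC4, hC5, hC6]
    noncomm_ring
  have key2 : M * ((C * M) * M) = C - 3 * C ^ 2 + 6 * C ^ 3 := by
    have h1 : M * ((C * M) * M) = ((M * C) * M) * M := by noncomm_ring
    rw [h1, e1, e2, e3]
  have key3 : M * ((C * M) * ((C * M) * M)) = C ^ 2 - 4 * C ^ 3 := by
    have h1 : M * ((C * M) * ((C * M) * M)) = ((((M * C) * M) * C) * M) * M := by noncomm_ring
    rw [h1, e1, e2, e4', e5', e6']
  -- convert to scalar conditions
  set t3 : ℝ := b ⬝ᵥ ((C ^ 3).mulVec e4) with ht3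
  have mu1 : b ⬝ᵥ (C.mulVec e4) = r * (1 / 2) := by
    rw [hC, Matrix.smul_mulVec, dotProduct_smul, smul_eq_mul, ← h2]
    rfl
  have mu2 : b ⬝ᵥ ((C ^ 2).mulVec e4) = r ^ 2 * (1 / 6) := by
    have h1 : C ^ 2 = (r ^ 2) • (A * A) := by
      rw [hC, smul_pow]; congr 1; noncomm_ring
    rw [h1, Matrix.smul_mulVec, dotProduct_smul, smul_eq_mul, ← h3]
    have h4 : (A * A).mulVec e4 = A.mulVec (A.mulVec e4) := by
      rw [Matrix.mulVec_mulVec]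
    rw [h4]
    rfl
  have hQ2 : 0 ≤ r * (1 / 2) - 3 * (r ^ 2 * (1 / 6)) + 6 * t3 := by
    have hsplit : C - 3 * C ^ 2 + 6 * C ^ 3
        = C - (C ^ 2 + C ^ 2 + C ^ 2) + (C ^ 3 + C ^ 3 + C ^ 3 + C ^ 3 + C ^ 3 + C ^ 3) := by
      noncomm_ring
    have h1 : b ⬝ᵥ ((M * ((C * M) * M)).mulVec e4)
        = r * (1 / 2) - 3 * (r ^ 2 * (1 / 6)) + 6 * t3 := by
      rw [key2, hsplit]
      simp only [Matrix.add_mulVec, Matrix.sub_mulVec, dotProduct_add,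
        dotProduct_sub, mu1, mu2, ← ht3]
      ring
    rw [h1] at hS2
    exact hS2
  have hQ3 : 0 ≤ r ^ 2 * (1 / 6) - 4 * t3 := by
    have hsplit : C ^ 2 - 4 * C ^ 3 = C ^ 2 - (C ^ 3 + C ^ 3 + C ^ 3 + C ^ 3) := by
      noncomm_ring
    have h1 : b ⬝ᵥ ((M * ((C * M) * ((C * M) * M))).mulVec e4)
        = r ^ 2 * (1 / 6) - 4 * t3 := by
      rw [key3, hsplit]
      simp only [Matrix.add_mulVec, Matrix.sub_mulVec, dotProduct_add,
        dotProduct_sub, mu2, ← ht3]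
      ring
    rw [h1] at hS3
    exact hS3
  -- contradiction: these force r ≤ 2
  have hr0 : (0 : ℝ) < r := by linarith
  nlinarith [hQ2, hQ3, mul_lt_mul_of_pos_left hr hr0]
end
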